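/- Let Ψ be exponentially distributed with mean rn, r, n > 0, and let g ≥ 0, i, p > 0. Then B(c) = rn·(g+p) − p·c + (i+p)·∫₀^c (c − ψ)·(1/(rn))·e^{−ψ/(rn)} dψ equals (g − i)·rn + i·c + (i+p)·rn·e^{−c/(rn)} for c ≥ 0, and is minimized at c* = rn·ln((i+p)/i), with minimum value (g + i·ln((i+p)/i))·rn. -/

import Mathlib

/-- Billing cost for exponentially distributed aggregate query volume with mean rn:
B(c) = rn·(g+p) − p·c + (i+p)·∫₀^c (c−ψ)·(1/(rn))·e^{−ψ/(rn)} dψ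
     = (g−i)·rn + i·c + (i+p)·rn·e^{−c/(rn)} for c ≥ 0,
minimized at c* = rn·ln((i+p)/i), with minimum value (g + i·ln((i+p)/i))·rn. -/
theorem exponential_billing_cost (r n g i p : ℝ) (hr : 0 < r) (hn : 0 < n)
    (hg : 0 ≤ g) (hi : 0 < i) (hp : 0 < p)
    (B : ℝ → ℝ)
    (hB : ∀ c, B c = r * n * (g + p) - p * c +
        (i + p) * ∫ ψ in (0:ℝ)..c, (c - ψ) * ((1 / (r * n)) * Real.exp (-ψ / (r * n)))) :
    (∀ c, 0 ≤ c →
        B c = (g - i) * (r * n) + i * c + (i + p) * (r * n) * Real.exp (-c / (r * n))) ∧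
      (0 ≤ r * n * Real.log ((i + p) / i)) ∧
      (∀ c, 0 ≤ c → B (r * n * Real.log ((i + p) / i)) ≤ B c) ∧
      B (r * n * Real.log ((i + p) / i)) = (g + i * Real.log ((i + p) / i)) * (r * n) := by
  set m := r * n with hm_def
  have hm : 0 < m := mul_pos hr hn
  -- integral computation
  have hint : ∀ c : ℝ, (∫ ψ in (0:ℝ)..c, (c - ψ) * ((1 / m) * Real.exp (-ψ / m)))
      = c - m + m * Real.exp (-c / m) := by
    intro c
    have hderiv : ∀ ψ : ℝ, HasDerivAt (fun ψ => (m - c + ψ) * Real.exp (-ψ / m))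
        ((c - ψ) * ((1 / m) * Real.exp (-ψ / m))) ψ := by
      intro ψ
      have h1 : HasDerivAt (fun ψ : ℝ => -ψ / m) (-1 / m) ψ := by
        simpa using (hasDerivAt_id ψ).neg.div_const m
      have h2 := h1.exp
      have h3 : HasDerivAt (fun ψ : ℝ => m - c + ψ) 1 ψ := by
        simpa using (hasDerivAt_id ψ).const_add (m - c)
      have := h3.mul h2
      refine this.congr_deriv ?_
      have hmi : m * (1 / m) = 1 := mul_one_div_cancel hm.ne'
      linear_combination (-Real.exp (-ψ / m)) * hmi
    have hcont : Continuous fun ψ : ℝ => (c - ψ) * ((1 / m) * Real.exp (-ψ / m)) := by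
      fun_prop
    rw [intervalIntegral.integral_eq_sub_of_hasDerivAt (fun ψ _ => hderiv ψ)
      (hcont.intervalIntegrable 0 c)]
    simp
    ring
  have hform : ∀ c : ℝ, B c = (g - i) * m + i * c + (i + p) * m * Real.exp (-c / m) := by
    intro c
    rw [hB c, hint c]
    ring
  have hip : (0:ℝ) < i + p := by linarith
  have hlog : 0 ≤ Real.log ((i + p) / i) := by
    apply Real.log_nonneg
    rw [le_div_iff₀ hi]
    linarith
  set cs := m * Real.log ((i + p) / i) with hcs_def
  have hcs : 0 ≤ cs := mul_nonneg hm.le hlog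
  have hexp : Real.exp (-cs / m) = i / (i + p) := by
    have : -cs / m = Real.log (i / (i + p)) := by
      rw [hcs_def, Real.log_div hi.ne' hip.ne', Real.log_div hip.ne' hi.ne']
      field_simp
      ring
    rw [this, Real.exp_log (div_pos hi hip)]
  refine ⟨fun c _ => hform c, hcs, ?_, ?_⟩
  · intro c _
    rw [hform c, hform cs, hexp]
    have key : Real.exp (-cs / m) * (1 + (cs - c) / m) ≤ Real.exp (-c / m) := by
      have h := Real.add_one_le_exp ((cs - c) / m)
      calc Real.exp (-cs / m) * (1 + (cs - c) / m)
          ≤ Real.exp (-cs / m) * Real.exp ((cs - c) / m) := by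
            apply mul_le_mul_of_nonneg_left _ (Real.exp_pos _).le
            linarith
        _ = Real.exp (-c / m) := by
            rw [← Real.exp_add]; ring_nf
    rw [hexp] at key
    have key2 : (i + p) * m * (i / (i + p) * (1 + (cs - c) / m)) ≤
        (i + p) * m * Real.exp (-c / m) :=
      mul_le_mul_of_nonneg_left key (by positivity)
    have : (i + p) * m * (i / (i + p) * (1 + (cs - c) / m)) =
        i * m + i * (cs - c) := by
      field_simp
    have h4 : (i + p) * m * (i / (i + p)) = i * m := by
      field_simp
    rw [this] at key2
    linarith
  · rw [hform cs, hexp, hcs_def]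
    field_simp
    ring
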